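/- Let X, Y be metric spaces and φ : X → Y a uniformly continuous map. Then the push-forward map μ ↦ φ_*μ on tight probability measures is uniformly continuous from (tProb(X), bounded-Lipschitz metric of X) to (tProb(Y), bounded-Lipschitz metric of Y). -/

import Mathlib

open MeasureTheory

/-- The bounded-Lipschitz distance `‖μ − ν‖_d`. -/
noncomputable def blDist {X : Type*} [MetricSpace X] [MeasurableSpace X]
    (μ ν : Measure X) : ℝ :=
  ⨆ f : {f : X → ℝ // (∀ x, |f x| ≤ 1) ∧ LipschitzWith 1 f},
    (∫ x, f.1 x ∂μ - ∫ x, f.1 x ∂ν)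

instance blDist_index_nonempty {X : Type*} [MetricSpace X] :
    Nonempty {f : X → ℝ // (∀ x, |f x| ≤ 1) ∧ LipschitzWith 1 f} :=
  ⟨⟨fun _ => 0, fun _ => by simp, (LipschitzWith.const 0).weaken (by norm_num)⟩⟩

lemma abs_integral_le_one {X : Type*} [MeasurableSpace X] (μ : Measure X)
    [IsProbabilityMeasure μ] (f : X → ℝ) (hf : ∀ x, |f x| ≤ 1) :
    |∫ x, f x ∂μ| ≤ 1 := by
  have h := norm_integral_le_of_norm_le_const (μ := μ) (f := f) (C := 1)
    (Filter.Eventually.of_forall fun x => by simpa [Real.norm_eq_abs] using hf x)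
  simpa [Real.norm_eq_abs, measure_univ] using h

lemma le_blDist {X : Type*} [MetricSpace X] [MeasurableSpace X]
    (μ ν : Measure X) [IsProbabilityMeasure μ] [IsProbabilityMeasure ν]
    (f : {f : X → ℝ // (∀ x, |f x| ≤ 1) ∧ LipschitzWith 1 f}) :
    (∫ x, f.1 x ∂μ - ∫ x, f.1 x ∂ν) ≤ blDist μ ν := by
  unfold blDist
  apply le_ciSup (f := fun g : {f : X → ℝ // (∀ x, |f x| ≤ 1) ∧ LipschitzWith 1 f} =>
    (∫ x, g.1 x ∂μ - ∫ x, g.1 x ∂ν)) _ f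
  refine ⟨2, ?_⟩
  rintro _ ⟨g, rfl⟩
  have h1 := abs_le.mp (abs_integral_le_one μ g.1 g.2.1)
  have h2 := abs_le.mp (abs_integral_le_one ν g.1 g.2.1)
  simp only
  linarith [h1.1, h1.2, h2.1, h2.2]

/-- if `φ : X → Y` is uniformly continuous then the push-forward map on tight
probability measures is uniformly continuous from the bounded-Lipschitz metric of `X` to
the bounded-Lipschitz metric of `Y`. -/
theorem pushforward_uniformlyContinuous_blDist
    {X Y : Type*} [MetricSpace X] [MeasurableSpace X] [BorelSpace X]
    [MetricSpace Y] [MeasurableSpace Y] [BorelSpace Y]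
    (φ : X → Y) (hφ : UniformContinuous φ) :
    ∀ ε : ℝ, 0 < ε → ∃ δ : ℝ, 0 < δ ∧
      ∀ μ ν : Measure X, IsProbabilityMeasure μ → IsProbabilityMeasure ν →
        μ.InnerRegular → ν.InnerRegular →
        blDist μ ν < δ → blDist (μ.map φ) (ν.map φ) < ε := by
  intro ε hε
  obtain ⟨r, hr, hφr⟩ := Metric.uniformContinuous_iff.mp hφ (ε/4) (by positivity)
  set L : ℝ := max (2 / r) 1 with hLdef
  have hL1 : (1:ℝ) ≤ L := le_max_right _ _
  have hL0 : (0:ℝ) < L := lt_of_lt_of_le one_pos hL1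
  have hLr : 2 ≤ L * r := by
    have h : 2 / r ≤ L := le_max_left _ _
    have : (2 / r) * r ≤ L * r := mul_le_mul_of_nonneg_right h hr.le
    rwa [div_mul_cancel₀ _ hr.ne'] at this
  refine ⟨ε / (4 * L), by positivity, ?_⟩
  intro μ ν hμ hν _ _ hlt
  have hX : Nonempty X := by
    by_contra hempty
    rw [not_nonempty_iff] at hempty
    have h1 := hμ.measure_univ
    rw [Set.eq_empty_of_isEmpty (Set.univ : Set X), measure_empty] at h1
    exact zero_ne_one h1
  have hφm : Measurable φ := hφ.continuous.measurable
  have key : ∀ g : {f : Y → ℝ // (∀ y, |f y| ≤ 1) ∧ LipschitzWith 1 f},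
      (∫ y, g.1 y ∂(μ.map φ) - ∫ y, g.1 y ∂(ν.map φ)) ≤ ε/2 := by
    intro g
    set h : X → ℝ := fun x => g.1 (φ x) with hdef
    have hcont : Continuous h := (g.2.2.continuous).comp hφ.continuous
    have hb : ∀ x, |h x| ≤ 1 := fun x => g.2.1 _
    set F : X → ℝ := fun x => ⨆ x' : X, (h x' - L * dist x x') with Fdef
    have hbdd : ∀ x : X, BddAbove (Set.range fun x' => h x' - L * dist x x') := by
      intro x
      refine ⟨1, ?_⟩
      rintro _ ⟨x', rfl⟩
      have h1 := (abs_le.mp (hb x')).2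
      have h2 : 0 ≤ L * dist x x' := mul_nonneg hL0.le dist_nonneg
      simp only
      linarith
    have hF_ge : ∀ x, h x ≤ F x := by
      intro x
      have h1 := le_ciSup (hbdd x) x
      simpa using h1
    have hF_le1 : ∀ x, F x ≤ 1 := by
      intro x
      refine ciSup_le fun x' => ?_
      have h1 := (abs_le.mp (hb x')).2
      have h2 : 0 ≤ L * dist x x' := mul_nonneg hL0.le dist_nonneg
      linarith
    have hF_abs : ∀ x, |F x| ≤ 1 := fun x => abs_le.mpr
      ⟨le_trans (abs_le.mp (hb x)).1 (hF_ge x), hF_le1 x⟩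
    have hF_near : ∀ x, F x ≤ h x + ε/4 := by
      intro x
      refine ciSup_le fun x' => ?_
      by_cases hd : dist x x' < r
      · have hdd : dist x' x < r := by rwa [dist_comm]
        have hgd := hφr hdd
        have hg := g.2.2.dist_le_mul (φ x') (φ x)
        rw [NNReal.coe_one, one_mul, Real.dist_eq] at hg
        have h1 : h x' - h x ≤ ε/4 := le_trans (le_abs_self _) (le_trans hg hgd.le)
        have h2 : 0 ≤ L * dist x x' := mul_nonneg hL0.le dist_nonneg
        linarith
      · push_neg at hd
        have h1 : L * r ≤ L * dist x x' := mul_le_mul_of_nonneg_left hd hL0.le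
        have h2 := (abs_le.mp (hb x')).2
        have h3 := (abs_le.mp (hb x)).1
        linarith [hε]
    have hF_lip : ∀ x y, F x ≤ F y + L * dist x y := by
      intro x y
      refine ciSup_le fun x' => ?_
      have h1 : h x' - L * dist y x' ≤ F y := le_ciSup (hbdd y) x'
      have h2 : dist y x' ≤ dist x y + dist x x' := by
        rw [dist_comm x y]; exact dist_triangle _ _ _
      have h3 : L * dist y x' ≤ L * dist x y + L * dist x x' := by nlinarith
      linarith
    have hFlip : LipschitzWith ⟨L, hL0.le⟩ F :=
      LipschitzWith.of_le_add_mul _ (fun x y => hF_lip x y)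
    have hFcont : Continuous F := hFlip.continuous
    -- integrability
    have hint : ∀ (κ : Measure X), IsProbabilityMeasure κ → Integrable h κ ∧ Integrable F κ := by
      intro κ hκ
      constructor
      · exact (integrable_const (1:ℝ)).mono' hcont.aestronglyMeasurable
          (Filter.Eventually.of_forall fun x => by simpa [Real.norm_eq_abs] using hb x)
      · exact (integrable_const (1:ℝ)).mono' hFcont.aestronglyMeasurable
          (Filter.Eventually.of_forall fun x => by simpa [Real.norm_eq_abs] using hF_abs x)
    obtain ⟨hhμ, hFμ⟩ := hint μ hμ
    obtain ⟨hhν, hFν⟩ := hint ν hν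
    have hmapμ : ∫ y, g.1 y ∂(μ.map φ) = ∫ x, h x ∂μ :=
      integral_map hφm.aemeasurable g.2.2.continuous.aestronglyMeasurable
    have hmapν : ∫ y, g.1 y ∂(ν.map φ) = ∫ x, h x ∂ν :=
      integral_map hφm.aemeasurable g.2.2.continuous.aestronglyMeasurable
    have I1 : ∫ x, h x ∂μ ≤ ∫ x, F x ∂μ := integral_mono hhμ hFμ hF_ge
    have I2 : ∫ x, F x ∂ν ≤ ∫ x, h x ∂ν + ε/4 := by
      have h1 : ∫ x, F x ∂ν ≤ ∫ x, (h x + ε/4) ∂ν :=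
        integral_mono hFν (hhν.add (integrable_const _)) hF_near
      rwa [integral_add hhν (integrable_const _), integral_const, probReal_univ,
        smul_eq_mul, one_mul] at h1
    -- the rescaled function is admissible
    have hf0lip : LipschitzWith 1 (fun x => F x / L) := by
      apply LipschitzWith.of_le_add_mul
      intro x y
      rw [NNReal.coe_one, one_mul, div_le_iff₀ hL0, add_mul, div_mul_cancel₀ _ hL0.ne']
      have := hF_lip x y
      nlinarith [dist_nonneg (x := x) (y := y)]
    have hf0b : ∀ x, |F x / L| ≤ 1 := by
      intro x
      rw [abs_div, abs_of_pos hL0, div_le_one hL0]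
      exact le_trans (hF_abs x) hL1
    have I3 : (∫ x, F x / L ∂μ - ∫ x, F x / L ∂ν) ≤ blDist μ ν :=
      le_blDist μ ν ⟨fun x => F x / L, hf0b, hf0lip⟩
    rw [integral_div, integral_div] at I3
    have I4 : ∫ x, F x ∂μ - ∫ x, F x ∂ν ≤ L * blDist μ ν := by
      have heq : ∫ x, F x ∂μ - ∫ x, F x ∂ν
          = L * ((∫ x, F x ∂μ) / L - (∫ x, F x ∂ν) / L) := by
        field_simp
      rw [heq]
      exact mul_le_mul_of_nonneg_left I3 hL0.le
    have I5 : L * blDist μ ν ≤ ε/4 := by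
      have h1 : L * blDist μ ν ≤ L * (ε / (4 * L)) :=
        mul_le_mul_of_nonneg_left hlt.le hL0.le
      have h2 : L * (ε / (4 * L)) = ε / 4 := by field_simp
      linarith
    rw [hmapμ, hmapν]
    linarith
  have hfinal : blDist (μ.map φ) (ν.map φ) ≤ ε/2 := by
    unfold blDist
    exact ciSup_le key
  linarith
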